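/- The symmetrization map sym_ℓ : A → TS^ℓ(A) satisfies the (ℓ+1)-st symmetric identity, i.e. Σ_p sgn(C(p))·|C(p)|·sym_ℓ(a)^{p_1}·sym_ℓ(a^2)^{p_2}⋯sym_ℓ(a^{ℓ+1})^{p_{ℓ+1}} = 0 for all a ∈ A, the sum over partitions p = (p_1,…,p_{ℓ+1}) of ℓ+1 (with p_1 + 2p_2 + ⋯ + (ℓ+1)p_{ℓ+1} = ℓ+1), where C(p) is the conjugacy class of S_{ℓ+1} with cycle type p. Moreover sym_ℓ(1_A) = ℓ·1_{TS^ℓ(A)}. -/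

import Mathlib

open PiTensorProduct
open scoped TensorProduct

/-- The symmetrization map `sym_ℓ(a) = Σ_{i=1}^ℓ 1^{⊗(i-1)} ⊗ a ⊗ 1^{⊗(ℓ-i)}`. -/
noncomputable def symTen (k A : Type*) [Field k] [Ring A] [Algebra k A] (ℓ : ℕ)
    (a : A) : ⨂[k] _ : Fin ℓ, A :=
  ∑ i : Fin ℓ, tprod k (Function.update (fun _ : Fin ℓ => (1 : A)) i a)

/-- The number of cycles of length `j` (including fixed points, i.e. `1`-cycles) of a
permutation `σ` of `Fin m`; for a permutation in the conjugacy class `C(p)` of cycle type the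
partition `p = (p_1,…,p_m)` this is `p_j`. -/
def cycleCount {m : ℕ} (σ : Equiv.Perm (Fin m)) (j : ℕ) : ℕ :=
  (σ.cycleType + Multiset.replicate (m - σ.cycleType.sum) 1).count j

/-- The left-hand side `Σ_p sgn(C(p))·|C(p)|·ρ(a)^{p_1}·ρ(a^2)^{p_2}⋯ρ(a^m)^{p_m}` of the
`m`-th symmetric identity, rewritten as the sum over all permutations `σ ∈ S_m` of
`sgn(σ)·∏_j ρ(a^j)^{p_j(σ)}` where `p_j(σ)` is the number of `j`-cycles of `σ` (summing over
each conjugacy class `C(p)` contributes the term `sgn(C(p))·|C(p)|·∏_j ρ(a^j)^{p_j}`). -/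
noncomputable def symIdentLHS {A B : Type*} [Ring A] [Ring B] (ρ : A → B) (m : ℕ) (a : A) : B :=
  ∑ σ : Equiv.Perm (Fin m), (Equiv.Perm.sign σ : ℤ) •
    ((List.range m).map (fun j => ρ (a ^ (j + 1)) ^ cycleCount σ (j + 1))).prod

/-! ### Auxiliary lemmas -/

/-- If `g` is invariant under `σ`, it is invariant under every integer power of `σ`. -/
private lemma invariant_zpow {α β : Type*} (σ : Equiv.Perm α) (g : α → β)
    (h : ∀ t, g (σ t) = g t) : ∀ (n : ℤ) (x : α), g ((σ ^ n) x) = g x := by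
  have hnat : ∀ (τ : Equiv.Perm α), (∀ t, g (τ t) = g t) →
      ∀ (n : ℕ) (x : α), g ((τ ^ n) x) = g x := by
    intro τ hτ n
    induction n with
    | zero => intro x; simp
    | succ n ih =>
      intro x
      rw [pow_succ, Equiv.Perm.mul_apply, ih, hτ]
  have hinv : ∀ t, g (σ⁻¹ t) = g t := by
    intro t
    conv_rhs => rw [← show σ (σ⁻¹ t) = t from Equiv.apply_symm_apply σ t]
    rw [h]
  intro n x
  cases n with
  | ofNat n => rw [Int.ofNat_eq_coe, zpow_natCast]; exact hnat σ h n x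
  | negSucc n => rw [zpow_negSucc, ← inv_pow]; exact hnat σ⁻¹ hinv (n + 1) x

/-- A function invariant under `σ` is constant on the cycles of `σ`. -/
private lemma invariant_iff_sameCycle {m : ℕ} {β : Type*} (σ : Equiv.Perm (Fin m))
    (g : Fin m → β) :
    g ∘ σ = g ↔ ∀ x y : Fin m, σ.SameCycle x y → g x = g y := by
  constructor
  · intro h x y hxy
    obtain ⟨i, hi⟩ := hxy
    rw [← hi]
    exact (invariant_zpow σ g (fun t => congrFun h t) i x).symm
  · intro h
    funext t
    exact h (σ t) t ⟨-1, by simp⟩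

/-- The sum of the signs of the permutations preserving a non-injective function is zero. -/
private lemma signsum_eq_zero {m l : ℕ} (g : Fin m → Fin l) (hg : ¬ Function.Injective g) :
    ∑ σ ∈ Finset.univ.filter (fun σ : Equiv.Perm (Fin m) => g ∘ σ = g),
      ((Equiv.Perm.sign σ : ℤˣ) : ℤ) = 0 := by
  rw [Function.not_injective_iff] at hg
  obtain ⟨i, j, hgij, hij⟩ := hg
  have hswap : ∀ s : Fin m, g (Equiv.swap i j s) = g s := by
    intro s
    rcases eq_or_ne s i with rfl | hsi
    · rw [Equiv.swap_apply_left, hgij]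
    rcases eq_or_ne s j with rfl | hsj
    · rw [Equiv.swap_apply_right, hgij]
    · rw [Equiv.swap_apply_of_ne_of_ne hsi hsj]
  apply Finset.sum_involution (fun σ _ => Equiv.swap i j * σ)
  · intro σ _
    simp [Equiv.Perm.sign_mul, Equiv.Perm.sign_swap hij]
  · intro σ _ _ hcontra
    apply hij
    have h2 := congrFun (congrArg (fun τ : Equiv.Perm (Fin m) => (τ : Fin m → Fin m)) hcontra)
      (σ⁻¹ i)
    simp only [Equiv.Perm.coe_mul, Function.comp_apply, show ∀ x, σ (σ⁻¹ x) = x from fun x => Equiv.apply_symm_apply σ x,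
      Equiv.swap_apply_left] at h2
    exact h2.symm
  · intro σ hσ
    simp only [Finset.mem_filter, Finset.mem_univ, true_and] at hσ ⊢
    funext t
    simp only [Function.comp_apply, Equiv.Perm.mul_apply]
    rw [hswap]
    exact congrFun hσ t
  · intro σ _
    rw [← mul_assoc, Equiv.swap_mul_self, one_mul]

private lemma list_range_map_prod {M : Type*} [CommMonoid M] (n : ℕ) (f : ℕ → M) :
    ((List.range n).map f).prod = ∏ j ∈ Finset.range n, f j := by
  induction n with
  | zero => simp
  | succ n ih =>
    rw [List.range_succ, List.map_append, List.prod_append, Finset.prod_range_succ, ih]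
    simp

/-- Key step: in a commutative ring, for a fixed permutation `σ` of `Fin m`, the product
`∏_j p_{j+1}^{c_{j+1}(σ)}` of power sums over the cycle type of `σ` equals the sum over all
`σ`-invariant functions `g : Fin m → Fin l` of `∏_t y_{g(t)}`. -/
private lemma prod_powersum_eq_sum_invariant {R : Type*} [CommRing R] {l m : ℕ}
    (y : Fin l → R) (σ : Equiv.Perm (Fin m)) (hm : 0 < m) :
    ∏ j ∈ Finset.range m, (∑ i, y i ^ (j + 1)) ^ cycleCount σ (j + 1)
      = ∑ g ∈ Finset.univ.filter (fun g : Fin m → Fin l => g ∘ σ = g), ∏ t, y (g t) := by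
  classical
  letI st : Setoid (Fin m) :=
    ⟨σ.SameCycle, ⟨fun x => Equiv.Perm.SameCycle.refl σ x, fun h => h.symm,
      fun h h' => h.trans h'⟩⟩
  let Q := Quotient st
  haveI : Fintype Q := Fintype.ofFinite Q
  let π : Fin m → Q := fun t => ⟦t⟧
  let sz : Q → ℕ := fun q => (Finset.univ.filter fun t => π t = q).card
  have hmk : ∀ t x : Fin m, π t = π x ↔ σ.SameCycle t x := by
    intro t x
    exact Quotient.eq
  have hπσ : ∀ t, π (σ t) = π t := by
    intro t
    exact Quotient.sound ⟨-1, by simp⟩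
  have hout : ∀ q : Q, π q.out = q := fun q => Quotient.out_eq q
  -- description of the fibers
  have F2 : ∀ x ∈ σ.support, (Finset.univ.filter fun t => π t = π x) = (σ.cycleOf x).support := by
    intro x hx
    ext t
    simp only [Finset.mem_filter, Finset.mem_univ, true_and, Equiv.Perm.mem_support_cycleOf_iff]
    rw [hmk]
    constructor
    · intro h; exact ⟨h.symm, hx⟩
    · intro h; exact h.1.symm
  have F1 : ∀ x, x ∉ σ.support → (Finset.univ.filter fun t => π t = π x) = {x} := by
    intro x hx
    have hfix : σ x = x := by rwa [← Equiv.Perm.notMem_support]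
    ext t
    simp only [Finset.mem_filter, Finset.mem_univ, true_and, Finset.mem_singleton]
    rw [hmk]
    constructor
    · intro h
      obtain ⟨i, hi⟩ := h.symm
      rw [← hi, Equiv.Perm.zpow_apply_eq_self_of_apply_eq_self hfix]
    · rintro rfl; exact Equiv.Perm.SameCycle.refl σ t
  have hsz_supp : ∀ x ∈ σ.support, sz (π x) = (σ.cycleOf x).support.card := by
    intro x hx
    show (Finset.univ.filter fun t => π t = π x).card = _
    rw [F2 x hx]
  have hsz_fix : ∀ x, x ∉ σ.support → sz (π x) = 1 := by
    intro x hx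
    show (Finset.univ.filter fun t => π t = π x).card = 1
    rw [F1 x hx, Finset.card_singleton]
  have hsz_pos : ∀ q : Q, 1 ≤ sz q := by
    intro q
    have : q.out ∈ Finset.univ.filter fun t => π t = q := by
      simp [hout q]
    exact Finset.card_pos.mpr ⟨q.out, this⟩
  have hsz_le : ∀ q : Q, sz q ≤ m := by
    intro q
    calc sz q ≤ Finset.univ.card := Finset.card_filter_le _ _
    _ = m := by simp
  have hfib_uniq : ∀ q : Q, sz q = 1 → ∀ t t' : Fin m, π t = q → π t' = q → t = t' := by
    intro q hq t t' ht ht'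
    obtain ⟨b, hb⟩ := Finset.card_eq_one.mp hq
    have h1 : t ∈ Finset.univ.filter fun s => π s = q := by simp [ht]
    have h2 : t' ∈ Finset.univ.filter fun s => π s = q := by simp [ht']
    rw [hb, Finset.mem_singleton] at h1 h2
    rw [h1, h2]
  have hsz_one_iff : ∀ x : Fin m, sz (π x) = 1 → x ∉ σ.support := by
    intro x hx hmem
    have hne : σ x ≠ x := Equiv.Perm.mem_support.mp hmem
    exact hne (hfib_uniq (π x) hx (σ x) x (hπσ x) rfl)
  -- the counting lemma
  have hcount : ∀ j : ℕ, (Finset.univ.filter fun q : Q => sz q = j).card + 1 = cycleCount σ j + 1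
      → True := fun _ _ => trivial
  clear hcount
  have hcount : ∀ j : ℕ, 1 ≤ j →
      (Finset.univ.filter fun q : Q => sz q = j).card = cycleCount σ j := by
    intro j hj
    rw [cycleCount, Multiset.count_add, Multiset.count_replicate, Equiv.Perm.sum_cycleType]
    rcases eq_or_lt_of_le hj with rfl | hj2
    · -- j = 1
      have hct : σ.cycleType.count 1 = 0 := by
        apply Multiset.count_eq_zero_of_notMem
        intro hmem
        have := Equiv.Perm.two_le_of_mem_cycleType hmem
        omega
      rw [hct, if_pos rfl, zero_add]
      have hcard : (Finset.univ.filter fun q : Q => sz q = 1).card = σ.supportᶜ.card := by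
        apply Finset.card_bij' (fun q _ => q.out) (fun x _ => π x)
        · intro q hq
          simp only [Finset.mem_filter, Finset.mem_univ, true_and] at hq
          rw [Finset.mem_compl]
          rw [← hout q] at hq
          exact hsz_one_iff q.out hq
        · intro x hx
          rw [Finset.mem_compl] at hx
          simp only [Finset.mem_filter, Finset.mem_univ, true_and]
          exact hsz_fix x hx
        · intro q hq
          exact hout q
        · intro x hx
          simp only [Finset.mem_compl] at hx
          have h1 : sz (π x) = 1 := hsz_fix x hx
          exact hfib_uniq (π x) h1 (π x).out x (hout (π x)) rfl
      rw [hcard, Finset.card_compl, Fintype.card_fin]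
    · -- 2 ≤ j
      have hj2' : 2 ≤ j := hj2
      rw [if_neg (by omega), add_zero]
      have hct : σ.cycleType.count j
          = (σ.cycleFactorsFinset.filter fun γ => γ.support.card = j).card := by
        rw [Equiv.Perm.cycleType_def, Multiset.count_map]
        have : (Finset.filter (fun γ : Equiv.Perm (Fin m) => γ.support.card = j)
            σ.cycleFactorsFinset).card
            = Multiset.card (Multiset.filter (fun γ : Equiv.Perm (Fin m) => γ.support.card = j)
              σ.cycleFactorsFinset.val) := rfl
        rw [this]
        congr 1
        apply Multiset.filter_congr
        intro γ _
        simp only [Function.comp_apply]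
        exact eq_comm
      rw [hct]
      apply Finset.card_bij (fun q _ => σ.cycleOf q.out)
      · intro q hq
        simp only [Finset.mem_filter, Finset.mem_univ, true_and] at hq ⊢
        have hqs : q.out ∈ σ.support := by
          by_contra hq'
          have := hsz_fix q.out hq'
          rw [hout q] at this
          omega
        constructor
        · exact Equiv.Perm.cycleOf_mem_cycleFactorsFinset_iff.mpr hqs
        · have := hsz_supp q.out hqs
          rw [hout q] at this
          omega
      · intro q hq q' hq' heq
        simp only [Finset.mem_filter, Finset.mem_univ, true_and] at hq hq'
        have hqs : q.out ∈ σ.support := by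
          by_contra hc
          have := hsz_fix q.out hc; rw [hout q] at this; omega
        have hqs' : q'.out ∈ σ.support := by
          by_contra hc
          have := hsz_fix q'.out hc; rw [hout q'] at this; omega
        have : q'.out ∈ (σ.cycleOf q.out).support := by
          rw [heq, Equiv.Perm.mem_support_cycleOf_iff]
          exact ⟨Equiv.Perm.SameCycle.refl σ q'.out, hqs'⟩
        rw [Equiv.Perm.mem_support_cycleOf_iff] at this
        have hsc : σ.SameCycle q'.out q.out := this.1.symm
        rw [← hout q, ← hout q']
        exact ((hmk q'.out q.out).mpr hsc).symm
      · rintro γ hγ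
        simp only [Finset.mem_filter] at hγ
        obtain ⟨hγf, hγcard⟩ := hγ
        have hsupp_ne : γ.support.Nonempty := by
          rw [← Finset.card_pos, hγcard]; omega
        obtain ⟨x, hxγ⟩ := hsupp_ne
        have hγx : γ = σ.cycleOf x := Equiv.Perm.cycle_is_cycleOf hxγ hγf
        have hxσ : x ∈ σ.support := by
          rw [Equiv.Perm.mem_support]
          have hmem := Equiv.Perm.mem_cycleFactorsFinset_iff.mp hγf
          have hx' : γ x = σ x := hmem.2 x hxγ
          have : γ x ≠ x := Equiv.Perm.mem_support.mp hxγ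
          rwa [hx'] at this
        refine ⟨π x, ?_, ?_⟩
        · simp only [Finset.mem_filter, Finset.mem_univ, true_and]
          rw [hsz_supp x hxσ, ← hγx, hγcard]
        · have hsc : σ.SameCycle (π x).out x := (hmk (π x).out x).mp (hout (π x))
          rw [hsc.cycleOf_eq, ← hγx]
  -- the grouping of the product of power sums over the cycle sizes
  have hgroup : ∏ q : Q, (∑ i, y i ^ sz q)
      = ∏ j ∈ Finset.range m, (∑ i, y i ^ (j + 1)) ^ cycleCount σ (j + 1) := by
    rw [← Finset.prod_fiberwise_of_maps_to
      (g := fun q : Q => sz q - 1) (t := Finset.range m)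
      (fun q _ => Finset.mem_range.mpr (by
        have h1 := hsz_pos q
        have h2 := hsz_le q
        show sz q - 1 < m
        omega))
      (fun q => ∑ i, y i ^ sz q)]
    apply Finset.prod_congr rfl
    intro j hj
    have hfil : (Finset.univ.filter fun q : Q => sz q - 1 = j)
        = Finset.univ.filter fun q : Q => sz q = j + 1 := by
      apply Finset.filter_congr
      intro q _
      have := hsz_pos q
      constructor <;> intro h <;> omega
    rw [hfil, ← hcount (j + 1) (by omega)]
    rw [Finset.prod_congr rfl (fun q hq => by
      simp only [Finset.mem_filter] at hq
      rw [hq.2]), Finset.prod_const]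
  -- expanding the product of power sums
  have hexpand : ∏ q : Q, (∑ i, y i ^ sz q)
      = ∑ f ∈ Fintype.piFinset (fun _ : Q => (Finset.univ : Finset (Fin l))),
          ∏ q : Q, y (f q) ^ sz q := by
    exact Finset.prod_univ_sum _ _
  rw [← hgroup, hexpand, Fintype.piFinset_univ]
  -- rewriting each summand as a product over `Fin m`
  have hsummand : ∀ f : Q → Fin l, ∏ q : Q, y (f q) ^ sz q = ∏ t : Fin m, y (f (π t)) := by
    intro f
    rw [← Finset.prod_fiberwise Finset.univ π (fun t => y (f (π t)))]
    apply Finset.prod_congr rfl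
    intro q _
    rw [Finset.prod_congr rfl (fun t ht => by
      simp only [Finset.mem_filter] at ht
      rw [ht.2]), Finset.prod_const]
  rw [Finset.sum_congr rfl (fun f _ => hsummand f)]
  -- the bijection between functions on the quotient and invariant functions
  apply Finset.sum_nbij' (fun f : Q → Fin l => f ∘ π) (fun g : Fin m → Fin l => fun q => g q.out)
  · intro f _
    simp only [Finset.mem_filter, Finset.mem_univ, true_and]
    funext t
    simp only [Function.comp_apply]
    rw [hπσ]
  · intro g _
    exact Finset.mem_univ _
  · intro f _
    funext q
    simp only [Function.comp_apply]
    rw [hout q]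
  · intro g hg
    simp only [Finset.mem_filter, Finset.mem_univ, true_and] at hg
    funext t
    simp only [Function.comp_apply]
    have hsc : σ.SameCycle (π t).out t := (hmk (π t).out t).mp (hout (π t))
    exact (invariant_iff_sameCycle σ g).mp hg _ _ hsc
  · intro f _
    apply Finset.prod_congr rfl
    intro t _
    rfl

/-- The main commutative computation: the symmetric identity for power sums of `l` elements
in degree `l + 1`. -/
private lemma comm_main {R : Type*} [CommRing R] {l : ℕ} (y : Fin l → R) :
    ∑ σ : Equiv.Perm (Fin (l + 1)), (Equiv.Perm.sign σ : ℤ) •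
      ((List.range (l + 1)).map
        (fun j => (∑ i, y i ^ (j + 1)) ^ cycleCount σ (j + 1))).prod = 0 := by
  classical
  have key : ∀ σ : Equiv.Perm (Fin (l + 1)),
      ((List.range (l + 1)).map
        (fun j => (∑ i, y i ^ (j + 1)) ^ cycleCount σ (j + 1))).prod
      = ∑ g ∈ Finset.univ.filter (fun g : Fin (l + 1) → Fin l => g ∘ σ = g), ∏ t, y (g t) := by
    intro σ
    rw [list_range_map_prod]
    exact prod_powersum_eq_sum_invariant y σ (Nat.succ_pos l)
  calc ∑ σ : Equiv.Perm (Fin (l + 1)), (Equiv.Perm.sign σ : ℤ) •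
      ((List.range (l + 1)).map
        (fun j => (∑ i, y i ^ (j + 1)) ^ cycleCount σ (j + 1))).prod
      = ∑ σ : Equiv.Perm (Fin (l + 1)), ∑ g : Fin (l + 1) → Fin l,
          if g ∘ σ = g then (Equiv.Perm.sign σ : ℤ) • ∏ t, y (g t) else 0 := by
        refine Finset.sum_congr rfl fun σ _ => ?_
        rw [key σ, Finset.smul_sum, Finset.sum_filter]
    _ = ∑ g : Fin (l + 1) → Fin l, ∑ σ : Equiv.Perm (Fin (l + 1)),
          if g ∘ σ = g then (Equiv.Perm.sign σ : ℤ) • ∏ t, y (g t) else 0 :=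
        Finset.sum_comm
    _ = 0 := by
        refine Finset.sum_eq_zero fun g _ => ?_
        rw [← Finset.sum_filter]
        have hsum : ∑ σ ∈ Finset.univ.filter (fun σ : Equiv.Perm (Fin (l + 1)) => g ∘ σ = g),
            (Equiv.Perm.sign σ : ℤ) • ∏ t, y (g t)
            = (∑ σ ∈ Finset.univ.filter (fun σ : Equiv.Perm (Fin (l + 1)) => g ∘ σ = g),
                ((Equiv.Perm.sign σ : ℤˣ) : ℤ)) • ∏ t, y (g t) := by
          rw [Finset.sum_smul]
        rw [hsum, signsum_eq_zero, zero_smul]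
        intro hinj
        have := Fintype.card_le_of_injective g hinj
        simp only [Fintype.card_fin] at this
        omega

set_option maxHeartbeats 1000000 in
set_option synthInstance.maxHeartbeats 400000 in
/-- the symmetrization map `sym_ℓ : A → TS^ℓ(A)` satisfies the `(ℓ+1)`-st
symmetric identity, and `sym_ℓ(1_A) = ℓ·1`. -/
theorem symTen_satisfies_symmetric_identity (k A : Type*) [Field k] [CharZero k] [Ring A]
    [Algebra k A] (ℓ : ℕ) (hℓ : 0 < ℓ) :
    (∀ a : A, symIdentLHS (symTen k A ℓ) (ℓ + 1) a = 0) ∧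
    symTen k A ℓ (1 : A) = ℓ • (1 : ⨂[k] _ : Fin ℓ, A) := by
  constructor
  · intro a
    classical
    set x : Fin ℓ → (⨂[k] (_ : Fin ℓ), A) :=
      fun i => tprod k (Function.update (fun _ : Fin ℓ => (1 : A)) i a) with hx
    -- the `x i` pairwise commute
    have hcomm : ∀ u ∈ Set.range x, ∀ v ∈ Set.range x, u * v = v * u := by
      rintro _ ⟨i, rfl⟩ _ ⟨i', rfl⟩
      simp only [hx, tprod_mul_tprod]
      congr 1
      funext t
      simp only [Pi.mul_apply, Function.update_apply]
      split_ifs <;> simp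
    letI : CommRing (Algebra.adjoin k (Set.range x)) := Algebra.adjoinCommRingOfComm k hcomm
    set Y : Fin ℓ → (Algebra.adjoin k (Set.range x)) :=
      fun i => ⟨x i, Algebra.subset_adjoin ⟨i, rfl⟩⟩ with hY
    -- powers of x i
    have hxpow : ∀ (i : Fin ℓ) (n : ℕ),
        x i ^ (n + 1) = tprod k (Function.update (fun _ : Fin ℓ => (1 : A)) i (a ^ (n + 1))) := by
      intro i n
      induction n with
      | zero => simp [hx]
      | succ n ih =>
        rw [pow_succ, ih, hx, tprod_mul_tprod]
        congr 1
        funext t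
        simp only [Pi.mul_apply, Function.update_apply]
        split_ifs <;> simp [pow_succ]
    have hval : ∀ j : ℕ, symTen k A ℓ (a ^ (j + 1))
        = (Subalgebra.val _) (∑ i, Y i ^ (j + 1)) := by
      intro j
      rw [map_sum]
      rw [symTen]
      refine Finset.sum_congr rfl fun i _ => ?_
      rw [map_pow]
      show tprod k (Function.update (fun _ : Fin ℓ => (1 : A)) i (a ^ (j + 1))) = x i ^ (j + 1)
      rw [hxpow i j]
    have hmain := comm_main Y
    calc symIdentLHS (symTen k A ℓ) (ℓ + 1) a
        = (Subalgebra.val (Algebra.adjoin k (Set.range x)))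
            (∑ σ : Equiv.Perm (Fin (ℓ + 1)), (Equiv.Perm.sign σ : ℤ) •
              ((List.range (ℓ + 1)).map
                (fun j => (∑ i, Y i ^ (j + 1)) ^ cycleCount σ (j + 1))).prod) := by
          rw [symIdentLHS, map_sum]
          refine Finset.sum_congr rfl fun σ _ => ?_
          rw [map_zsmul]
          congr 1
          rw [map_list_prod, List.map_map]
          congr 1
          apply List.map_congr_left
          intro j _
          simp only [Function.comp_apply]
          rw [map_pow, ← hval j]
      _ = 0 := by rw [hmain, map_zero]
  · rw [symTen]
    have hupd : ∀ i : Fin ℓ, Function.update (fun _ : Fin ℓ => (1 : A)) i (1 : A)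
        = fun _ : Fin ℓ => (1 : A) := fun i => Function.update_eq_self i _
    rw [Finset.sum_congr rfl (fun i _ => by rw [hupd i])]
    rw [Finset.sum_const, Finset.card_univ, Fintype.card_fin]
    congr 1
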